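/- Gradient bound for the value function (Lemma 2 of the paper): Assume the parametrized policy class satisfies the score bound ‖∇_θ log π_θ(a|s)‖₂ ≤ G for all θ ∈ ℝ^d, s ∈ S, a ∈ A. Let h : S×A → ℝ with |h(s,a)| ≤ 1 for all (s,a). Then the map θ ↦ J_h(π_θ) is differentiable on ℝ^d and its gradient satisfies ‖∇_θ J_h(π_θ)‖₂ ≤ G/(1−γ)² for every θ. -/

import Mathlib

open scoped BigOperators
open Matrix

noncomputable section

/-- State-transition matrix `P_π(s,s') = ∑_a π(a|s) P(s'|s,a)` induced by policy `π`. -/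
def Pmat {S A : Type*} [Fintype A] (P : S → A → S → ℝ) (π : S → A → ℝ) : Matrix S S ℝ :=
  Matrix.of fun s s' => ∑ a, π s a * P s a s'

/-- Discounted state-action occupancy measure
`d_ρ^π(s,a) = (1-γ) ∑ₜ γ^t (ρᵀ P_π^t)(s) π(a|s)`. -/
def occupancy {S A : Type*} [Fintype S] [DecidableEq S] [Fintype A]
    (P : S → A → S → ℝ) (γ : ℝ) (ρ : S → ℝ) (π : S → A → ℝ) (s : S) (a : A) : ℝ :=
  (1 - γ) * (∑' t : ℕ, γ ^ t * Matrix.vecMul ρ (Pmat P π ^ t) s) * π s a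

/-- Value vector `V_h^π = ∑ₜ γ^t P_π^t h_π` where `h_π(s) = ∑_a π(a|s) h(s,a)`. -/
def Vvec {S A : Type*} [Fintype S] [DecidableEq S] [Fintype A]
    (P : S → A → S → ℝ) (γ : ℝ) (h : S → A → ℝ) (π : S → A → ℝ) : S → ℝ :=
  ∑' t : ℕ, γ ^ t • (Pmat P π ^ t).mulVec (fun s => ∑ a, π s a * h s a)

/-- Scalar value `J_h(π) = ∑_s ρ(s) V_h^π(s)`. -/
def Jval {S A : Type*} [Fintype S] [DecidableEq S] [Fintype A]
    (P : S → A → S → ℝ) (γ : ℝ) (ρ : S → ℝ) (h : S → A → ℝ) (π : S → A → ℝ) : ℝ :=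
  ∑ s, ρ s * Vvec P γ h π s

/-- Gradient of the log-policy (score function) at parameter `θ`. -/
def gradLog {S A : Type*} {d : ℕ} (pc : EuclideanSpace ℝ (Fin d) → S → A → ℝ)
    (θ : EuclideanSpace ℝ (Fin d)) (s : S) (a : A) : EuclideanSpace ℝ (Fin d) :=
  gradient (fun θ' => Real.log (pc θ' s a)) θ

namespace Stmt9Aux

variable {S A : Type*} [Fintype S] [DecidableEq S] [Fintype A] {d : ℕ}
variable {P : S → A → S → ℝ} {h : S → A → ℝ} {pc : EuclideanSpace ℝ (Fin d) → S → A → ℝ}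
variable {G : ℝ}

def W (P : S → A → S → ℝ) (h : S → A → ℝ) (pc : EuclideanSpace ℝ (Fin d) → S → A → ℝ)
    (t : ℕ) (θ : EuclideanSpace ℝ (Fin d)) : S → ℝ :=
  (Pmat P (pc θ) ^ t).mulVec fun s => ∑ a, pc θ s a * h s a

lemma W_zero (θ : EuclideanSpace ℝ (Fin d)) (s : S) :
    W P h pc 0 θ s = ∑ a, pc θ s a * h s a := by
  simp [W]

lemma W_succ (t : ℕ) (θ : EuclideanSpace ℝ (Fin d)) (s : S) :
    W P h pc (t+1) θ s = ∑ s', (∑ a, pc θ s a * P s a s') * W P h pc t θ s' := by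
  rw [W, pow_succ', ← Matrix.mulVec_mulVec]
  simp [Matrix.mulVec, dotProduct, Pmat, W]

section bounds
variable (hP0 : ∀ s a s', 0 ≤ P s a s') (hP1 : ∀ s a, ∑ s', P s a s' = 1)
variable (hpos : ∀ θ s a, 0 < pc θ s a) (hnorm : ∀ θ s, ∑ a, pc θ s a = 1)
variable (hh : ∀ s a, |h s a| ≤ 1)
set_option linter.unusedSectionVars false
include hP0 hP1 hpos hnorm hh

lemma q_nonneg (θ : EuclideanSpace ℝ (Fin d)) (s s' : S) :
    0 ≤ ∑ a, pc θ s a * P s a s' :=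
  Finset.sum_nonneg fun a _ => mul_nonneg (hpos θ s a).le (hP0 s a s')

lemma q_rowsum (θ : EuclideanSpace ℝ (Fin d)) (s : S) :
    ∑ s', ∑ a, pc θ s a * P s a s' = 1 := by
  rw [Finset.sum_comm]
  simp only [← Finset.mul_sum, hP1]
  simpa using hnorm θ s

lemma W_abs_le : ∀ (t : ℕ) (θ : EuclideanSpace ℝ (Fin d)) (s : S), |W P h pc t θ s| ≤ 1 := by
  intro t
  induction t with
  | zero =>
    intro θ s
    rw [W_zero]
    calc |∑ a, pc θ s a * h s a| ≤ ∑ a, |pc θ s a * h s a| := Finset.abs_sum_le_sum_abs _ _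
      _ ≤ ∑ a, pc θ s a := by
          refine Finset.sum_le_sum fun a _ => ?_
          rw [abs_mul, abs_of_pos (hpos θ s a)]
          nlinarith [hh s a, (hpos θ s a).le, abs_nonneg (h s a)]
      _ = 1 := hnorm θ s
  | succ t ih =>
    intro θ s
    rw [W_succ]
    calc |∑ s', (∑ a, pc θ s a * P s a s') * W P h pc t θ s'|
        ≤ ∑ s', |(∑ a, pc θ s a * P s a s') * W P h pc t θ s'| :=
          Finset.abs_sum_le_sum_abs _ _
      _ ≤ ∑ s', ∑ a, pc θ s a * P s a s' := by
          refine Finset.sum_le_sum fun s' _ => ?_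
          rw [abs_mul, abs_of_nonneg (q_nonneg hP0 hP1 hpos hnorm hh θ s s')]
          nlinarith [ih θ s', q_nonneg hP0 hP1 hpos hnorm hh θ s s', abs_nonneg (W P h pc t θ s')]
      _ = 1 := q_rowsum hP0 hP1 hpos hnorm hh θ s

end bounds

section diff
variable (hpos : ∀ θ s a, 0 < pc θ s a)
variable (hdiff : ∀ s a, Differentiable ℝ fun θ => Real.log (pc θ s a))
variable (hG : ∀ θ s a, ‖gradLog pc θ s a‖ ≤ G)
set_option linter.unusedSectionVars false
include hpos hdiff hG

lemma log_fderiv_norm_le (θ : EuclideanSpace ℝ (Fin d)) (s : S) (a : A) :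
    ‖fderiv ℝ (fun θ' => Real.log (pc θ' s a)) θ‖ ≤ G := by
  have e : ‖gradLog pc θ s a‖ = ‖fderiv ℝ (fun θ' => Real.log (pc θ' s a)) θ‖ := by
    unfold gradLog gradient
    exact LinearIsometryEquiv.norm_map _ _
  rw [← e]; exact hG θ s a

lemma pc_hasFDerivAt (θ : EuclideanSpace ℝ (Fin d)) (s : S) (a : A) :
    HasFDerivAt (fun θ' => pc θ' s a)
      (pc θ s a • fderiv ℝ (fun θ' => Real.log (pc θ' s a)) θ) θ := by
  have hfun : (fun θ' => pc θ' s a) = fun θ' => Real.exp (Real.log (pc θ' s a)) :=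
    funext fun θ' => (Real.exp_log (hpos θ' s a)).symm
  have h1 : HasFDerivAt (fun θ' => Real.log (pc θ' s a))
      (fderiv ℝ (fun θ' => Real.log (pc θ' s a)) θ) θ := ((hdiff s a) θ).hasFDerivAt
  have h2 := h1.exp
  rw [Real.exp_log (hpos θ s a), ← hfun] at h2
  exact h2

lemma pc_diff (s : S) (a : A) : Differentiable ℝ (fun θ' => pc θ' s a) :=
  fun θ => (pc_hasFDerivAt hpos hdiff hG θ s a).differentiableAt

lemma pc_fderiv_norm_le (θ : EuclideanSpace ℝ (Fin d)) (s : S) (a : A) :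
    ‖fderiv ℝ (fun θ' => pc θ' s a) θ‖ ≤ pc θ s a * G := by
  rw [(pc_hasFDerivAt hpos hdiff hG θ s a).fderiv, norm_smul, Real.norm_eq_abs,
    abs_of_pos (hpos θ s a)]
  exact mul_le_mul_of_nonneg_left (log_fderiv_norm_le hpos hdiff hG θ s a) (hpos θ s a).le

lemma W_diff : ∀ (t : ℕ) (s : S), Differentiable ℝ (fun θ => W P h pc t θ s) := by
  intro t
  induction t with
  | zero =>
    intro s
    simp only [W_zero]
    exact Differentiable.fun_sum fun a _ => (pc_diff hpos hdiff hG s a).mul_const _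
  | succ t ih =>
    intro s
    simp only [W_succ]
    exact Differentiable.fun_sum fun s' _ =>
      (Differentiable.fun_sum fun a _ => (pc_diff hpos hdiff hG s a).mul_const _).mul (ih s')

end diff

section main
variable (hP0 : ∀ s a s', 0 ≤ P s a s') (hP1 : ∀ s a, ∑ s', P s a s' = 1)
variable (hpos : ∀ θ s a, 0 < pc θ s a) (hnorm : ∀ θ s, ∑ a, pc θ s a = 1)
variable (hh : ∀ s a, |h s a| ≤ 1)
variable (hdiff : ∀ s a, Differentiable ℝ fun θ => Real.log (pc θ s a))
variable (hG : ∀ θ s a, ‖gradLog pc θ s a‖ ≤ G)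
set_option linter.unusedSectionVars false
include hP0 hP1 hpos hnorm hh hdiff hG

lemma pcD_bound (θ v : EuclideanSpace ℝ (Fin d)) (s : S) (a : A) :
    |fderiv ℝ (fun θ' => pc θ' s a) θ v| ≤ pc θ s a * G * ‖v‖ := by
  rw [← Real.norm_eq_abs]
  calc ‖fderiv ℝ (fun θ' => pc θ' s a) θ v‖
      ≤ ‖fderiv ℝ (fun θ' => pc θ' s a) θ‖ * ‖v‖ :=
        (fderiv ℝ (fun θ' => pc θ' s a) θ).le_opNorm v
    _ ≤ pc θ s a * G * ‖v‖ :=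
        mul_le_mul_of_nonneg_right (pc_fderiv_norm_le hpos hdiff hG θ s a) (norm_nonneg v)

lemma sum_pcD_bound (θ v : EuclideanSpace ℝ (Fin d)) (s : S) :
    ∑ a, |fderiv ℝ (fun θ' => pc θ' s a) θ v| ≤ G * ‖v‖ := by
  calc ∑ a, |fderiv ℝ (fun θ' => pc θ' s a) θ v|
      ≤ ∑ a, pc θ s a * G * ‖v‖ :=
        Finset.sum_le_sum fun a _ => pcD_bound hP0 hP1 hpos hnorm hh hdiff hG θ v s a
    _ = (∑ a, pc θ s a) * (G * ‖v‖) := by rw [Finset.sum_mul]; simp [mul_assoc]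
    _ = G * ‖v‖ := by rw [hnorm θ s, one_mul]

lemma fderiv_qsum_apply (θ v : EuclideanSpace ℝ (Fin d)) (s s' : S) :
    fderiv ℝ (fun θ' => ∑ a, pc θ' s a * P s a s') θ v
      = ∑ a, fderiv ℝ (fun θ' => pc θ' s a) θ v * P s a s' := by
  rw [fderiv_fun_sum (fun a _ => ((pc_diff hpos hdiff hG s a) θ).mul_const _),
    ContinuousLinearMap.sum_apply]
  refine Finset.sum_congr rfl fun a _ => ?_
  rw [fderiv_mul_const ((pc_diff hpos hdiff hG s a) θ)]
  simp [smul_eq_mul, mul_comm]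

lemma sum_qD_bound (θ v : EuclideanSpace ℝ (Fin d)) (s : S) :
    ∑ s', |fderiv ℝ (fun θ' => ∑ a, pc θ' s a * P s a s') θ v| ≤ G * ‖v‖ := by
  calc ∑ s', |fderiv ℝ (fun θ' => ∑ a, pc θ' s a * P s a s') θ v|
      ≤ ∑ s', ∑ a, |fderiv ℝ (fun θ' => pc θ' s a) θ v| * P s a s' := by
        refine Finset.sum_le_sum fun s' _ => ?_
        rw [fderiv_qsum_apply hP0 hP1 hpos hnorm hh hdiff hG θ v s s']
        refine (Finset.abs_sum_le_sum_abs _ _).trans (Finset.sum_le_sum fun a _ => ?_)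
        rw [abs_mul, abs_of_nonneg (hP0 s a s')]
    _ = ∑ a, |fderiv ℝ (fun θ' => pc θ' s a) θ v| * ∑ s', P s a s' := by
        rw [Finset.sum_comm]
        simp [Finset.mul_sum]
    _ = ∑ a, |fderiv ℝ (fun θ' => pc θ' s a) θ v| := by simp [hP1]
    _ ≤ G * ‖v‖ := sum_pcD_bound hP0 hP1 hpos hnorm hh hdiff hG θ v s

lemma W_fderiv_bound (hG0 : 0 ≤ G) :
    ∀ (t : ℕ) (θ : EuclideanSpace ℝ (Fin d)) (s : S) (v : EuclideanSpace ℝ (Fin d)),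
      |fderiv ℝ (fun θ' => W P h pc t θ' s) θ v| ≤ ((t : ℝ) + 1) * G * ‖v‖ := by
  intro t
  induction t with
  | zero =>
    intro θ s v
    have hf : (fun θ' => W P h pc 0 θ' s) = fun θ' => ∑ a, pc θ' s a * h s a :=
      funext fun θ' => W_zero θ' s
    have hrw : fderiv ℝ (fun θ' => W P h pc 0 θ' s) θ v
        = ∑ a, fderiv ℝ (fun θ' => pc θ' s a) θ v * h s a := by
      rw [hf, fderiv_fun_sum (fun a _ => ((pc_diff hpos hdiff hG s a) θ).mul_const _),
        ContinuousLinearMap.sum_apply]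
      refine Finset.sum_congr rfl fun a _ => ?_
      rw [fderiv_mul_const ((pc_diff hpos hdiff hG s a) θ)]
      simp [smul_eq_mul, mul_comm]
    rw [hrw]
    push_cast
    rw [zero_add, one_mul]
    calc |∑ a, fderiv ℝ (fun θ' => pc θ' s a) θ v * h s a|
        ≤ ∑ a, |fderiv ℝ (fun θ' => pc θ' s a) θ v * h s a| := Finset.abs_sum_le_sum_abs _ _
      _ ≤ ∑ a, |fderiv ℝ (fun θ' => pc θ' s a) θ v| := by
          refine Finset.sum_le_sum fun a _ => ?_
          rw [abs_mul]
          nlinarith [hh s a, abs_nonneg (fderiv ℝ (fun θ' => pc θ' s a) θ v),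
            abs_nonneg (h s a)]
      _ ≤ G * ‖v‖ := sum_pcD_bound hP0 hP1 hpos hnorm hh hdiff hG θ v s
  | succ t ih =>
    intro θ s v
    have hd1 : ∀ s', DifferentiableAt ℝ (fun θ' => ∑ a, pc θ' s a * P s a s') θ :=
      fun s' => (Differentiable.fun_sum fun a _ => (pc_diff hpos hdiff hG s a).mul_const _) θ
    have hd2 : ∀ s', DifferentiableAt ℝ (fun θ' => W P h pc t θ' s') θ :=
      fun s' => (W_diff hpos hdiff hG t s') θ
    have hf : (fun θ' => W P h pc (t+1) θ' s)
        = fun θ' => ∑ s', (∑ a, pc θ' s a * P s a s') * W P h pc t θ' s' :=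
      funext fun θ' => W_succ t θ' s
    have hrw : fderiv ℝ (fun θ' => W P h pc (t+1) θ' s) θ v
        = ∑ s', (fderiv ℝ (fun θ' => ∑ a, pc θ' s a * P s a s') θ v * W P h pc t θ s'
            + (∑ a, pc θ s a * P s a s') * fderiv ℝ (fun θ' => W P h pc t θ' s') θ v) := by
      rw [hf, fderiv_fun_sum (A := fun s' θ' => (∑ a, pc θ' s a * P s a s') * W P h pc t θ' s') (fun s' _ => (hd1 s').mul (hd2 s')), ContinuousLinearMap.sum_apply]
      refine Finset.sum_congr rfl fun s' _ => ?_
      rw [fderiv_fun_mul (hd1 s') (hd2 s')]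
      simp only [ContinuousLinearMap.add_apply, ContinuousLinearMap.smul_apply, smul_eq_mul]
      ring
    rw [hrw]
    have hbound : ∀ s' : S,
        |fderiv ℝ (fun θ' => ∑ a, pc θ' s a * P s a s') θ v * W P h pc t θ s'
          + (∑ a, pc θ s a * P s a s') * fderiv ℝ (fun θ' => W P h pc t θ' s') θ v|
        ≤ |fderiv ℝ (fun θ' => ∑ a, pc θ' s a * P s a s') θ v|
          + (∑ a, pc θ s a * P s a s') * (((t : ℝ) + 1) * G * ‖v‖) := by
      intro s'
      refine (abs_add_le _ _).trans (add_le_add ?_ ?_)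
      · rw [abs_mul]
        nlinarith [W_abs_le hP0 hP1 hpos hnorm hh t θ s',
          abs_nonneg (fderiv ℝ (fun θ' => ∑ a, pc θ' s a * P s a s') θ v),
          abs_nonneg (W P h pc t θ s')]
      · rw [abs_mul, abs_of_nonneg (q_nonneg hP0 hP1 hpos hnorm hh θ s s')]
        exact mul_le_mul_of_nonneg_left (ih θ s' v) (q_nonneg hP0 hP1 hpos hnorm hh θ s s')
    calc |∑ s', _| ≤ ∑ s', |_| := Finset.abs_sum_le_sum_abs _ _
      _ ≤ ∑ s', (|fderiv ℝ (fun θ' => ∑ a, pc θ' s a * P s a s') θ v|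
            + (∑ a, pc θ s a * P s a s') * (((t : ℝ) + 1) * G * ‖v‖)) :=
          Finset.sum_le_sum fun s' _ => hbound s'
      _ = (∑ s', |fderiv ℝ (fun θ' => ∑ a, pc θ' s a * P s a s') θ v|)
            + (∑ s', ∑ a, pc θ s a * P s a s') * (((t : ℝ) + 1) * G * ‖v‖) := by
          rw [Finset.sum_add_distrib, Finset.sum_mul]
      _ ≤ G * ‖v‖ + 1 * (((t : ℝ) + 1) * G * ‖v‖) := by
          have h1 := sum_qD_bound hP0 hP1 hpos hnorm hh hdiff hG θ v s
          rw [q_rowsum hP0 hP1 hpos hnorm hh θ s]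
          linarith
      _ ≤ ((((t : ℕ) + 1 : ℕ) : ℝ) + 1) * G * ‖v‖ := by
          push_cast
          nlinarith [norm_nonneg v, mul_nonneg hG0 (norm_nonneg v)]

end main

end Stmt9Aux


/-- Lemma 2 of the paper. Under the score bound `‖∇_θ log π_θ(a|s)‖ ≤ G`
and `|h| ≤ 1`, the map `θ ↦ J_h(π_θ)` is differentiable with
`‖∇_θ J_h(π_θ)‖ ≤ G/(1-γ)²`. -/
theorem stmt9 {S A : Type*} [Fintype S] [DecidableEq S] [Fintype A] [Nonempty S] [Nonempty A]
    {d : ℕ}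
    (P : S → A → S → ℝ) (hP0 : ∀ s a s', 0 ≤ P s a s') (hP1 : ∀ s a, ∑ s', P s a s' = 1)
    (γ : ℝ) (hγ0 : 0 < γ) (hγ1 : γ < 1)
    (ρ : S → ℝ) (hρ0 : ∀ s, 0 ≤ ρ s) (hρ1 : ∑ s, ρ s = 1)
    (pc : EuclideanSpace ℝ (Fin d) → S → A → ℝ)
    (hpos : ∀ θ s a, 0 < pc θ s a) (hnorm : ∀ θ s, ∑ a, pc θ s a = 1)
    (hdiff : ∀ s a, Differentiable ℝ fun θ => Real.log (pc θ s a))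
    (G : ℝ) (hG : ∀ θ s a, ‖gradLog pc θ s a‖ ≤ G)
    (h : S → A → ℝ) (hh : ∀ s a, |h s a| ≤ 1) :
    Differentiable ℝ (fun θ => Jval P γ ρ h (pc θ)) ∧
    ∀ θ, ‖gradient (fun θ' => Jval P γ ρ h (pc θ')) θ‖ ≤ G / (1 - γ) ^ 2 := by
  classical
  open Stmt9Aux in
  set W := Stmt9Aux.W P h pc with hWdef
  have hG0 : 0 ≤ G :=
    le_trans (norm_nonneg _) (hG 0 (Classical.arbitrary S) (Classical.arbitrary A))
  set f : ℕ → EuclideanSpace ℝ (Fin d) → ℝ :=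
    fun t θ => γ ^ t * ∑ s, ρ s * W t θ s with hfdef
  set u : ℕ → ℝ := fun t => γ ^ t * ((t : ℝ) + 1) * G with hudef
  have hγne : (1 : ℝ) - γ ≠ 0 := by linarith
  have hgnorm : ‖γ‖ < 1 := by rw [Real.norm_eq_abs, abs_of_pos hγ0]; exact hγ1
  have hsum1 : Summable (fun t : ℕ => (t : ℝ) * γ ^ t) := by
    simpa using summable_pow_mul_geometric_of_norm_lt_one 1 hgnorm
  have hsum2 : Summable (fun t : ℕ => γ ^ t) := summable_geometric_of_norm_lt_one hgnorm
  have hueq : u = fun t : ℕ => ((t : ℝ) * γ ^ t) * G + γ ^ t * G := funext fun t => by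
    simp only [hudef]; ring
  have husum : Summable u := by
    rw [hueq]; exact (hsum1.mul_right G).add (hsum2.mul_right G)
  have huval : ∑' t, u t = G / (1 - γ) ^ 2 := by
    rw [hueq, Summable.tsum_add (hsum1.mul_right G) (hsum2.mul_right G), tsum_mul_right, tsum_mul_right,
      tsum_coe_mul_geometric_of_norm_lt_one hgnorm, tsum_geometric_of_lt_one hγ0.le hγ1]
    field_simp
    ring
  have hWd : ∀ (t : ℕ) (s : S), Differentiable ℝ (fun θ => W t θ s) :=
    fun t s => Stmt9Aux.W_diff hpos hdiff hG t s
  have hfdiff : ∀ t, Differentiable ℝ (f t) := fun t =>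
    ((Differentiable.fun_sum fun s _ => (hWd t s).const_mul (ρ s)).const_mul _)
  have hfD : ∀ t θ, ‖fderiv ℝ (f t) θ‖ ≤ u t := by
    intro t θ
    refine ContinuousLinearMap.opNorm_le_bound _ ?_ ?_
    · positivity
    intro v
    have hsd : DifferentiableAt ℝ (fun θ' => ∑ s, ρ s * W t θ' s) θ :=
      (Differentiable.fun_sum fun s _ => (hWd t s).const_mul (ρ s)) θ
    have hrw : fderiv ℝ (f t) θ v
        = γ ^ t * ∑ s, ρ s * fderiv ℝ (fun θ' => W t θ' s) θ v := by
      simp only [hfdef]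
      rw [fderiv_const_mul hsd, fderiv_fun_sum (fun s _ => ((hWd t s) θ).const_mul (ρ s))]
      simp only [ContinuousLinearMap.smul_apply, ContinuousLinearMap.sum_apply, smul_eq_mul]
      congr 1
      refine Finset.sum_congr rfl fun s _ => ?_
      rw [fderiv_const_mul ((hWd t s) θ)]
      simp
    rw [Real.norm_eq_abs, hrw, abs_mul, abs_of_pos (pow_pos hγ0 t)]
    have hbd : |∑ s, ρ s * fderiv ℝ (fun θ' => W t θ' s) θ v|
        ≤ ((t : ℝ) + 1) * G * ‖v‖ := by
      calc |∑ s, ρ s * fderiv ℝ (fun θ' => W t θ' s) θ v|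
          ≤ ∑ s, |ρ s * fderiv ℝ (fun θ' => W t θ' s) θ v| := Finset.abs_sum_le_sum_abs _ _
        _ ≤ ∑ s, ρ s * (((t : ℝ) + 1) * G * ‖v‖) := by
            refine Finset.sum_le_sum fun s _ => ?_
            rw [abs_mul, abs_of_nonneg (hρ0 s)]
            exact mul_le_mul_of_nonneg_left
              (Stmt9Aux.W_fderiv_bound hP0 hP1 hpos hnorm hh hdiff hG hG0 t θ s v) (hρ0 s)
        _ = ((t : ℝ) + 1) * G * ‖v‖ := by
            rw [← Finset.sum_mul, hρ1, one_mul]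
    calc γ ^ t * |∑ s, ρ s * fderiv ℝ (fun θ' => W t θ' s) θ v|
        ≤ γ ^ t * (((t : ℝ) + 1) * G * ‖v‖) :=
          mul_le_mul_of_nonneg_left hbd (pow_pos hγ0 t).le
      _ = u t * ‖v‖ := by simp only [hudef]; ring
  have hxs : ∀ θ s, Summable (fun t => γ ^ t * W t θ s) := by
    intro θ s
    refine Summable.of_norm_bounded hsum2 fun t => ?_
    rw [Real.norm_eq_abs, abs_mul, abs_of_pos (pow_pos hγ0 t)]
    nlinarith [Stmt9Aux.W_abs_le hP0 hP1 hpos hnorm hh t θ s, (pow_pos hγ0 t).le,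
      abs_nonneg (W t θ s)]
  have hfs : ∀ θ, Summable (fun t => f t θ) := by
    intro θ
    refine Summable.of_norm_bounded hsum2 fun t => ?_
    simp only [hfdef]
    rw [Real.norm_eq_abs, abs_mul, abs_of_pos (pow_pos hγ0 t)]
    have : |∑ s, ρ s * W t θ s| ≤ 1 := by
      calc |∑ s, ρ s * W t θ s| ≤ ∑ s, |ρ s * W t θ s| := Finset.abs_sum_le_sum_abs _ _
        _ ≤ ∑ s, ρ s := by
            refine Finset.sum_le_sum fun s _ => ?_
            rw [abs_mul, abs_of_nonneg (hρ0 s)]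
            nlinarith [Stmt9Aux.W_abs_le hP0 hP1 hpos hnorm hh t θ s, hρ0 s,
              abs_nonneg (W t θ s)]
        _ = 1 := hρ1
    nlinarith [(pow_pos hγ0 t).le]
  have hJ : ∀ θ, Jval P γ ρ h (pc θ) = ∑' t, f t θ := by
    intro θ
    have hPi : Summable (fun t : ℕ =>
        γ ^ t • (Pmat P (pc θ) ^ t).mulVec fun s => ∑ a, pc θ s a * h s a) := by
      refine Pi.summable.2 fun s => ?_
      simpa [hWdef, Stmt9Aux.W, smul_eq_mul] using hxs θ s
    have hV : ∀ s, Vvec P γ h (pc θ) s = ∑' t, γ ^ t * W t θ s := by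
      intro s
      rw [Vvec, tsum_apply hPi]
      simp [hWdef, Stmt9Aux.W, smul_eq_mul]
    calc Jval P γ ρ h (pc θ) = ∑ s, ρ s * Vvec P γ h (pc θ) s := rfl
      _ = ∑ s, ∑' t, ρ s * (γ ^ t * W t θ s) := by
          refine Finset.sum_congr rfl fun s _ => ?_
          rw [hV s, ← tsum_mul_left]
      _ = ∑' t, ∑ s, ρ s * (γ ^ t * W t θ s) :=
          (Summable.tsum_finsetSum fun s _ => (hxs θ s).mul_left (ρ s)).symm
      _ = ∑' t, f t θ := by
          refine tsum_congr fun t => ?_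
          simp only [hfdef]
          rw [Finset.mul_sum]
          exact Finset.sum_congr rfl fun s _ => by ring
  have hfun : (fun θ => Jval P γ ρ h (pc θ)) = fun θ => ∑' t, f t θ := funext hJ
  constructor
  · rw [hfun]
    exact differentiable_tsum husum (fun t θ => ((hfdiff t) θ).hasFDerivAt) (fun t θ => hfD t θ)
  · intro θ
    have hgrad : ‖gradient (fun θ' => Jval P γ ρ h (pc θ')) θ‖
        = ‖fderiv ℝ (fun θ' => Jval P γ ρ h (pc θ')) θ‖ := by
      unfold gradient
      exact LinearIsometryEquiv.norm_map _ _
    rw [hgrad, hfun, fderiv_tsum_apply husum hfdiff (fun t θ' => hfD t θ') (hfs θ) θ]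
    have hnsum : Summable (fun t => ‖fderiv ℝ (f t) θ‖) :=
      Summable.of_nonneg_of_le (fun t => norm_nonneg _) (fun t => hfD t θ) husum
    calc ‖∑' t, fderiv ℝ (f t) θ‖ ≤ ∑' t, ‖fderiv ℝ (f t) θ‖ := norm_tsum_le_tsum_norm hnsum
      _ ≤ ∑' t, u t := Summable.tsum_le_tsum (fun t => hfD t θ) hnsum husum
      _ = G / (1 - γ) ^ 2 := huval
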